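/- Let Q be an n²×n² real matrix that is a fully symmetric 4th-order tensor (invariant under all permutation operators T_σ, σ ∈ S₄), satisfies the trace conditions tr(Q_{ij}) = δ_{ij} on its n×n blocks, and satisfies Q² = Q. Then there exist rank-one orthogonal projections P^1,...,P^n ∈ M_n(R) with P^jP^k = δ_{jk}P^j and Σ_j P^j = I_n such that Q = Σ_{j=1}^n X(P^j) X(P^j)^T, where X: M_n(R) → R^{n²} stacks the columns of a matrix. -/

import Mathlib

open Matrix BigOperators

private lemma specDecomp17 {ι : Type*} [Fintype ι] [DecidableEq ι] (n : ℕ)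
    (Q : Matrix ι ι ℝ) (hQ : Q.IsHermitian) (hidem : Q * Q = Q)
    (htr : Q.trace = (n : ℝ)) :
    ∃ w : Fin n → ι → ℝ,
      (∀ p q, Q p q = ∑ k, w k p * w k q) ∧
      (∀ k m, ∑ p, w k p * w m p = if k = m then (1:ℝ) else 0) := by
  classical
  set μ : ι → ℝ := hQ.eigenvalues with hμdef
  set u : ι → ι → ℝ := fun j => ⇑(hQ.eigenvectorBasis j) with hudef
  have horth : ∀ j j', ∑ p, u j p * u j' p = if j = j' then (1:ℝ) else 0 := by
    intro j j'
    have h := orthonormal_iff_ite.mp hQ.eigenvectorBasis.orthonormal j j'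
    simp [PiLp.inner_apply, RCLike.inner_apply, starRingEnd_apply, star_trivial] at h
    rw [← h]
    exact Finset.sum_congr rfl fun x _ => mul_comm _ _
  have heig : ∀ j, Q *ᵥ u j = μ j • u j := fun j => hQ.mulVec_eigenvectorBasis j
  have hune : ∀ j, u j ≠ 0 := by
    intro j hj
    have := horth j j
    rw [hj] at this
    simp at this
  have hμ01 : ∀ j, μ j = 0 ∨ μ j = 1 := by
    intro j
    have h1 : Q *ᵥ (Q *ᵥ u j) = Q *ᵥ u j := by rw [mulVec_mulVec, hidem]
    have h2 : (μ j * μ j) • u j = μ j • u j := by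
      calc (μ j * μ j) • u j = μ j • (μ j • u j) := by rw [smul_smul]
      _ = μ j • (Q *ᵥ u j) := by rw [heig]
      _ = Q *ᵥ (μ j • u j) := by rw [mulVec_smul]
      _ = Q *ᵥ (Q *ᵥ u j) := by rw [heig]
      _ = Q *ᵥ u j := h1
      _ = μ j • u j := heig j
    have h3 : (μ j * μ j - μ j) • u j = 0 := by
      rw [sub_smul, h2, sub_self]
    rcases smul_eq_zero.mp h3 with h | h
    · have : μ j * (μ j - 1) = 0 := by ring_nf; ring_nf at h; linarith
      rcases mul_eq_zero.mp this with h' | h'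
      · exact Or.inl h'
      · exact Or.inr (by linarith)
    · exact absurd h (hune j)
  have hentry : ∀ p q, Q p q = ∑ j, μ j * (u j p * u j q) := by
    intro p q
    conv_lhs => rw [hQ.spectral_theorem, Unitary.conjStarAlgAut_apply]
    rw [Matrix.mul_apply]
    apply Finset.sum_congr rfl
    intro j _
    rw [Matrix.mul_diagonal]
    simp [Matrix.star_apply, hQ.eigenvectorUnitary_apply, hudef]
    ring
  have htrsum : ∑ j, μ j = (n : ℝ) := by
    have h1 : Q.trace = ∑ j, μ j := by
      rw [Matrix.trace]
      unfold Matrix.diag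
      calc ∑ p, Q p p = ∑ p, ∑ j, μ j * (u j p * u j p) := by
            exact Finset.sum_congr rfl fun p _ => hentry p p
        _ = ∑ j, ∑ p, μ j * (u j p * u j p) := Finset.sum_comm
        _ = ∑ j, μ j * ∑ p, u j p * u j p := by
            exact Finset.sum_congr rfl fun j _ => (Finset.mul_sum _ _ _).symm
        _ = ∑ j, μ j := by
            refine Finset.sum_congr rfl fun j _ => ?_
            rw [horth j j]; simp
    rw [← h1, htr]
  set K : Finset ι := Finset.univ.filter (fun j => μ j = 1) with hKdef
  have hKcard : K.card = n := by
    have h2 : ∑ j, μ j = (K.card : ℝ) := by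
      rw [← Finset.sum_filter_add_sum_filter_not Finset.univ (fun j => μ j = 1)]
      have ha : ∑ j ∈ Finset.univ.filter (fun j => μ j = 1), μ j = (K.card : ℝ) := by
        rw [hKdef, Finset.sum_congr rfl (fun j hj => (Finset.mem_filter.mp hj).2)]
        simp
      have hb : ∑ j ∈ Finset.univ.filter (fun j => ¬ μ j = 1), μ j = 0 := by
        refine Finset.sum_eq_zero fun j hj => ?_
        rcases hμ01 j with h | h
        · exact h
        · exact absurd h (Finset.mem_filter.mp hj).2
      rw [ha, hb, add_zero]
    have := htrsum.symm.trans h2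
    exact_mod_cast this.symm
  have hcard : Fintype.card ↥K = n := by simp [hKcard]
  set e : Fin n ≃ ↥K := (Fintype.equivFinOfCardEq hcard).symm with hedef
  refine ⟨fun k => u ((e k) : ι), ?_, ?_⟩
  · intro p q
    rw [hentry p q]
    rw [← Finset.sum_filter_add_sum_filter_not Finset.univ (fun j => μ j = 1)]
    have hb : ∑ j ∈ Finset.univ.filter (fun j => ¬ μ j = 1), μ j * (u j p * u j q) = 0 := by
      refine Finset.sum_eq_zero fun j hj => ?_
      rcases hμ01 j with h | h
      · rw [h, zero_mul]
      · exact absurd h (Finset.mem_filter.mp hj).2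
    rw [hb, add_zero]
    have ha : ∑ j ∈ K, μ j * (u j p * u j q) = ∑ j ∈ K, u j p * u j q := by
      refine Finset.sum_congr rfl fun j hj => ?_
      rw [(Finset.mem_filter.mp hj).2, one_mul]
    rw [ha, ← Finset.sum_coe_sort K (fun j => u j p * u j q)]
    exact (Equiv.sum_comp e (fun j : ↥K => u (j : ι) p * u (j : ι) q)).symm
  · intro k m
    have h := horth ((e k) : ι) ((e m) : ι)
    rw [h]
    congr 1
    simp [Subtype.coe_inj, EmbeddingLike.apply_eq_iff_eq]


private lemma midLemma17 {n : ℕ} {Q : Matrix (Fin n × Fin n) (Fin n × Fin n) ℝ}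
  {A : Fin n → Matrix (Fin n) (Fin n) ℝ}
  (htr : ∀ i j : Fin n, (∑ r : Fin n, Q (i, r) (j, r)) = if i = j then (1 : ℝ) else 0)
  (s02 : ∀ a b c d : Fin n, Q (a,c) (b,d) = Q (c,a) (b,d))
  (s13 : ∀ a b c d : Fin n, Q (a,c) (b,d) = Q (a,c) (d,b))
  (s4 : ∀ a b c d : Fin n, Q (a,b) (c,d) = Q (a,d) (b,c))
  (Qexp : ∀ a c b d : Fin n, Q (a,c) (b,d) = ∑ k, A k a c * A k b d)
  (orthAA : ∀ k m, ∑ a, ∑ c, A k a c * A m a c = if k = m then (1:ℝ) else 0) :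
  (∀ k, (A k)ᵀ = A k) ∧ (∀ j m, A j * A m = A m * A j) := by
  classical
  have sc3 : ∀ (f : Fin n → Fin n → Fin n → ℝ),
      ∑ k : Fin n, ∑ b : Fin n, ∑ c : Fin n, f k b c
        = ∑ b : Fin n, ∑ c : Fin n, ∑ k : Fin n, f k b c := by
    intro f
    rw [Finset.sum_comm]
    exact Finset.sum_congr rfl fun b _ => Finset.sum_comm
  have keyA : ∀ m (x y : Fin n), ∑ b, ∑ d, Q (x,y) (b,d) * A m b d = A m x y := by
    intro m x y
    calc ∑ b, ∑ d, Q (x,y) (b,d) * A m b d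
        = ∑ b, ∑ d, ∑ k, A k x y * (A k b d * A m b d) := by
          refine Finset.sum_congr rfl fun b _ => Finset.sum_congr rfl fun d _ => ?_
          rw [Qexp, Finset.sum_mul]
          exact Finset.sum_congr rfl fun k _ => by ring
      _ = ∑ k, ∑ b, ∑ d, A k x y * (A k b d * A m b d) := (sc3 _).symm
      _ = ∑ k, A k x y * (∑ b, ∑ d, A k b d * A m b d) := by
          refine Finset.sum_congr rfl fun k _ => ?_
          rw [Finset.mul_sum]
          exact Finset.sum_congr rfl fun b _ => (Finset.mul_sum _ _ _).symm
      _ = ∑ k, A k x y * (if k = m then (1:ℝ) else 0) := by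
          refine Finset.sum_congr rfl fun k _ => by rw [orthAA]
      _ = A m x y := by simp
  have G1 : ∀ m (a c : Fin n), A m a c = A m c a := by
    intro m a c
    rw [← keyA m a c, ← keyA m c a]
    refine Finset.sum_congr rfl fun b _ => Finset.sum_congr rfl fun d _ => ?_
    rw [s02]
  have hT : ∀ k, (A k)ᵀ = A k := by
    intro k; ext a c; rw [Matrix.transpose_apply]; exact G1 k c a
  have G2M : ∑ k, A k * A k = 1 := by
    ext a d
    rw [Matrix.sum_apply, Matrix.one_apply]
    calc ∑ k, (A k * A k) a d = ∑ k, ∑ b, A k a b * A k b d := by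
          refine Finset.sum_congr rfl fun k _ => by rw [Matrix.mul_apply]
      _ = ∑ b, ∑ k, A k a b * A k b d := Finset.sum_comm
      _ = ∑ b, Q (a,b) (b,d) := by
          refine Finset.sum_congr rfl fun b _ => (Qexp a b b d).symm
      _ = ∑ b, Q (a,b) (d,b) := by
          refine Finset.sum_congr rfl fun b _ => s13 a b b d
      _ = if a = d then (1:ℝ) else 0 := htr a d
  have G3M : ∀ m, ∑ k, A k * A m * A k = A m := by
    intro m
    ext a d
    rw [Matrix.sum_apply]
    calc ∑ k, (A k * A m * A k) a d
        = ∑ k, ∑ b, ∑ c, A k a b * A m b c * A k c d := by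
          refine Finset.sum_congr rfl fun k _ => ?_
          simp_rw [Matrix.mul_apply, Finset.sum_mul]
          rw [Finset.sum_comm]
      _ = ∑ b, ∑ c, ∑ k, A k a b * A m b c * A k c d := sc3 _
      _ = ∑ b, ∑ c, A m b c * Q (a,b) (c,d) := by
          refine Finset.sum_congr rfl fun b _ => Finset.sum_congr rfl fun c _ => ?_
          rw [Qexp a b c d, Finset.mul_sum]
          exact Finset.sum_congr rfl fun k _ => by ring
      _ = ∑ b, ∑ c, A m b c * Q (a,d) (b,c) := by
          refine Finset.sum_congr rfl fun b _ => Finset.sum_congr rfl fun c _ => ?_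
          rw [s4]
      _ = ∑ b, ∑ c, ∑ k, A k a d * (A k b c * A m b c) := by
          refine Finset.sum_congr rfl fun b _ => Finset.sum_congr rfl fun c _ => ?_
          rw [Qexp a d b c, Finset.mul_sum]
          exact Finset.sum_congr rfl fun k _ => by ring
      _ = ∑ k, ∑ b, ∑ c, A k a d * (A k b c * A m b c) := (sc3 _).symm
      _ = ∑ k, A k a d * (if k = m then (1:ℝ) else 0) := by
          refine Finset.sum_congr rfl fun k _ => ?_
          rw [← orthAA k m, Finset.mul_sum]
          exact Finset.sum_congr rfl fun b _ => (Finset.mul_sum _ _ _).symm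
      _ = A m a d := by simp
  -- traces
  have dotlem : ∀ X Y : Matrix (Fin n) (Fin n) ℝ,
      ∑ a, ∑ b, X a b * Y a b = (X * Yᵀ).trace := by
    intro X Y
    rw [Matrix.trace]
    unfold Matrix.diag
    simp_rw [Matrix.mul_apply, Matrix.transpose_apply]
  have trA2 : ∀ m, (A m * A m).trace = 1 := by
    intro m
    have h := dotlem (A m) (A m)
    rw [hT] at h
    rw [← h, orthAA m m]
    simp
  have tsq : ∑ j, ∑ m, ((A j * A m) * (A m * A j)).trace = (n:ℝ) := by
    have h1 : ∀ j m : Fin n, ((A j * A m) * (A m * A j)).trace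
        = ((A j * A j) * (A m * A m)).trace := by
      intro j m
      rw [show (A j * A m) * (A m * A j) = (A j * (A m * A m)) * A j from by simp only [mul_assoc]]
      rw [Matrix.trace_mul_comm]
      rw [show A j * (A j * (A m * A m)) = (A j * A j) * (A m * A m) from by simp only [mul_assoc]]
    calc ∑ j, ∑ m, ((A j * A m) * (A m * A j)).trace
        = ∑ j, ∑ m, ((A j * A j) * (A m * A m)).trace := by
          exact Finset.sum_congr rfl fun j _ => Finset.sum_congr rfl fun m _ => h1 j m
      _ = ∑ j, ((A j * A j) * ∑ m, (A m * A m)).trace := by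
          refine Finset.sum_congr rfl fun j _ => ?_
          rw [Finset.mul_sum, Matrix.trace_sum]
      _ = ∑ j : Fin n, (1:ℝ) := by
          refine Finset.sum_congr rfl fun j _ => ?_
          rw [G2M, mul_one, trA2]
      _ = (n:ℝ) := by simp
  have tcr : ∑ j, ∑ m, ((A j * A m) * (A j * A m)).trace = (n:ℝ) := by
    have h1 : ∀ j m : Fin n, ((A j * A m) * (A j * A m)).trace
        = ((A j * A m * A j) * A m).trace := by
      intro j m
      rw [show (A j * A m) * (A j * A m) = (A j * A m * A j) * A m from by simp only [mul_assoc]]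
    rw [Finset.sum_comm]
    calc ∑ m, ∑ j, ((A j * A m) * (A j * A m)).trace
        = ∑ m, ((∑ j, A j * A m * A j) * A m).trace := by
          refine Finset.sum_congr rfl fun m _ => ?_
          rw [Finset.sum_mul, Matrix.trace_sum]
          exact Finset.sum_congr rfl fun j _ => h1 j m
      _ = ∑ m : Fin n, (1:ℝ) := by
          refine Finset.sum_congr rfl fun m _ => ?_
          rw [G3M, trA2]
      _ = (n:ℝ) := by simp
  -- commutativity
  have main : ∑ j, ∑ m, ∑ a, ∑ b, ((A j * A m - A m * A j) a b)^2 = 0 := by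
    have expand : ∀ j m : Fin n, ∑ a, ∑ b, ((A j * A m - A m * A j) a b)^2
        = ((A j * A m) * (A m * A j)).trace - 2 * ((A j * A m) * (A j * A m)).trace
          + ((A m * A j) * (A j * A m)).trace := by
      intro j m
      have e1 : ∑ a, ∑ b, ((A j * A m) a b) * ((A j * A m) a b)
          = ((A j * A m) * (A m * A j)).trace := by
        rw [dotlem]
        congr 1
        rw [Matrix.transpose_mul, hT, hT]
      have e2 : ∑ a, ∑ b, ((A j * A m) a b) * ((A m * A j) a b)
          = ((A j * A m) * (A j * A m)).trace := by
        rw [dotlem]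
        congr 1
        rw [Matrix.transpose_mul, hT, hT]
      have e3 : ∑ a, ∑ b, ((A m * A j) a b) * ((A m * A j) a b)
          = ((A m * A j) * (A j * A m)).trace := by
        rw [dotlem]
        congr 1
        rw [Matrix.transpose_mul, hT, hT]
      calc ∑ a, ∑ b, ((A j * A m - A m * A j) a b)^2
          = ∑ a, ∑ b, (((A j * A m) a b) * ((A j * A m) a b)
              - 2 * (((A j * A m) a b) * ((A m * A j) a b))
              + ((A m * A j) a b) * ((A m * A j) a b)) := by
            refine Finset.sum_congr rfl fun a _ => Finset.sum_congr rfl fun b _ => ?_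
            rw [Matrix.sub_apply]
            ring
        _ = (∑ a, ∑ b, ((A j * A m) a b) * ((A j * A m) a b))
              - 2 * (∑ a, ∑ b, ((A j * A m) a b) * ((A m * A j) a b))
              + ∑ a, ∑ b, ((A m * A j) a b) * ((A m * A j) a b) := by
            simp_rw [Finset.sum_add_distrib, Finset.sum_sub_distrib, Finset.mul_sum]
        _ = _ := by rw [e1, e2, e3]
    calc ∑ j, ∑ m, ∑ a, ∑ b, ((A j * A m - A m * A j) a b)^2
        = ∑ j, ∑ m, (((A j * A m) * (A m * A j)).trace
            - 2 * ((A j * A m) * (A j * A m)).trace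
            + ((A m * A j) * (A j * A m)).trace) := by
          exact Finset.sum_congr rfl fun j _ => Finset.sum_congr rfl fun m _ => expand j m
      _ = (∑ j, ∑ m, ((A j * A m) * (A m * A j)).trace)
            - 2 * (∑ j, ∑ m, ((A j * A m) * (A j * A m)).trace)
            + ∑ j, ∑ m, ((A m * A j) * (A j * A m)).trace := by
          simp_rw [Finset.sum_add_distrib, Finset.sum_sub_distrib, Finset.mul_sum]
      _ = (n:ℝ) - 2 * (n:ℝ) + (n:ℝ) := by
          rw [tsq, tcr]
          congr 1
          rw [Finset.sum_comm]
          exact tsq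
      _ = 0 := by ring
  have hAcomm : ∀ j m, A j * A m = A m * A j := by
    intro j m
    have h1 : ∀ x ∈ (Finset.univ : Finset (Fin n)),
        (0:ℝ) ≤ ∑ m, ∑ a, ∑ b, ((A x * A m - A m * A x) a b)^2 :=
      fun x _ => Finset.sum_nonneg fun _ _ => Finset.sum_nonneg fun _ _ =>
        Finset.sum_nonneg fun _ _ => sq_nonneg _
    have h2 := (Finset.sum_eq_zero_iff_of_nonneg h1).mp main j (Finset.mem_univ j)
    have h3 : ∀ x ∈ (Finset.univ : Finset (Fin n)),
        (0:ℝ) ≤ ∑ a, ∑ b, ((A j * A x - A x * A j) a b)^2 :=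
      fun x _ => Finset.sum_nonneg fun _ _ => Finset.sum_nonneg fun _ _ => sq_nonneg _
    have h4 := (Finset.sum_eq_zero_iff_of_nonneg h3).mp h2 m (Finset.mem_univ m)
    ext a b
    have h5 : ∀ x ∈ (Finset.univ : Finset (Fin n)),
        (0:ℝ) ≤ ∑ b, ((A j * A m - A m * A j) x b)^2 :=
      fun x _ => Finset.sum_nonneg fun _ _ => sq_nonneg _
    have h6 := (Finset.sum_eq_zero_iff_of_nonneg h5).mp h4 a (Finset.mem_univ a)
    have h7 : ∀ x ∈ (Finset.univ : Finset (Fin n)),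
        (0:ℝ) ≤ ((A j * A m - A m * A j) a x)^2 :=
      fun x _ => sq_nonneg _
    have h8 := (Finset.sum_eq_zero_iff_of_nonneg h7).mp h6 b (Finset.mem_univ b)
    have h9 : (A j * A m - A m * A j) a b = 0 :=
      pow_eq_zero_iff (n := 2) (by norm_num) |>.mp h8
    rw [Matrix.sub_apply] at h9
    linarith
  exact ⟨hT, hAcomm⟩


open Module in
private lemma jointDiag17 (n : ℕ) (A : Fin n → Matrix (Fin n) (Fin n) ℝ)
    (hsymA : ∀ k, (A k).IsHermitian) (hcomm : ∀ j k, A j * A k = A k * A j) :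
    ∃ (v : Fin n → (Fin n → ℝ)) (lam : Fin n → Fin n → ℝ),
      (∀ i j, ∑ a, v i a * v j a = if i = j then (1:ℝ) else 0) ∧
      (∀ k i, (A k) *ᵥ (v i) = lam k i • v i) := by
  classical
  set T : Fin n → Module.End ℝ (EuclideanSpace ℝ (Fin n)) :=
    fun k => Matrix.toEuclideanLin (A k) with hTdef
  have hTs : ∀ k, (T k).IsSymmetric := fun k => Matrix.isHermitian_iff_isSymmetric.mp (hsymA k)
  have hTc : Pairwise (Function.onFun Commute T) := by
    intro j k _
    show T j * T k = T k * T j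
    have : ∀ j k : Fin n, T j * T k = Matrix.toEuclideanLin (A j * A k) := by
      intro j k
      apply LinearMap.ext
      intro x
      show T j (T k x) = _
      simp only [hTdef, Matrix.toEuclideanLin_apply]
      simp [Matrix.mulVec_mulVec]
    rw [this, this, hcomm]
  set V : (Fin n → ℝ) → Submodule ℝ (EuclideanSpace ℝ (Fin n)) :=
    fun χ => ⨅ k, Module.End.eigenspace (T k) (χ k) with hVdef
  have horthV := LinearMap.IsSymmetric.orthogonalFamily_iInf_eigenspaces hTs
  have htop : ⨆ χ, V χ = ⊤ := LinearMap.IsSymmetric.iSup_iInf_eq_top_of_commute hTs hTc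
  have hindep : iSupIndep V := horthV.independent
  have hfin : {χ | V χ ≠ ⊥}.Finite := WellFoundedGT.finite_ne_bot_of_iSupIndep hindep
  haveI : Fintype ↥{χ | V χ ≠ ⊥} := hfin.fintype
  set W : ↥{χ | V χ ≠ ⊥} → Submodule ℝ (EuclideanSpace ℝ (Fin n)) :=
    fun χ => V χ.val with hWdef
  have hWint : DirectSum.IsInternal W := by
    rw [DirectSum.isInternal_submodule_iff_iSupIndep_and_iSup_eq_top]
    constructor
    · exact hindep.comp Subtype.coe_injective
    · apply le_antisymm le_top
      rw [← htop]
      apply iSup_le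
      intro χ
      by_cases h : V χ = ⊥
      · simp [h]
      · exact le_iSup_of_le ⟨χ, h⟩ le_rfl
  have hWorth : OrthogonalFamily ℝ (fun i => W i) (fun i => (W i).subtypeₗᵢ) :=
    fun i j hij => horthV (Subtype.coe_injective.ne hij)
  have hn : Module.finrank ℝ (EuclideanSpace ℝ (Fin n)) = n := finrank_euclideanSpace_fin
  set b := hWint.subordinateOrthonormalBasis hn hWorth with hbdef
  set χf : Fin n → (Fin n → ℝ) :=
    fun i => (hWint.subordinateOrthonormalBasisIndex hn i hWorth : ↥{χ | V χ ≠ ⊥}).val with hχdef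
  refine ⟨fun i => ⇑(b i), fun k i => χf i k, ?_, ?_⟩
  · intro i j
    have h := orthonormal_iff_ite.mp b.orthonormal i j
    simp [PiLp.inner_apply, RCLike.inner_apply, starRingEnd_apply, star_trivial] at h
    rw [← h]
    exact Finset.sum_congr rfl fun x _ => mul_comm _ _
  · intro k i
    have hmem := hWint.subordinateOrthonormalBasis_subordinate hn i hWorth
    have hmem2 : b i ∈ V (χf i) := hmem
    rw [hVdef] at hmem2
    simp only [Submodule.mem_iInf] at hmem2
    have h3 : T k (b i) = χf i k • (b i) := Module.End.mem_eigenspace_iff.mp (hmem2 k)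
    have h4 := congrArg (fun x : EuclideanSpace ℝ (Fin n) => (x : Fin n → ℝ)) h3
    simpa [hTdef, Matrix.toEuclideanLin_apply] using h4


private lemma finalLemma17 {n : ℕ} {Q : Matrix (Fin n × Fin n) (Fin n × Fin n) ℝ}
  {A : Fin n → Matrix (Fin n) (Fin n) ℝ} {v : Fin n → Fin n → ℝ} {lam : Fin n → Fin n → ℝ}
  (Qexp : ∀ a c b d : Fin n, Q (a,c) (b,d) = ∑ k, A k a c * A k b d)
  (orthAA : ∀ k m, ∑ a, ∑ c, A k a c * A m a c = if k = m then (1:ℝ) else 0)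
  (hvorth : ∀ i j, ∑ a, v i a * v j a = if i = j then (1:ℝ) else 0)
  (heig : ∀ k i, A k *ᵥ v i = lam k i • v i) :
    ∃ P : Fin n → Matrix (Fin n) (Fin n) ℝ,
      (∀ j, (P j)ᵀ = P j) ∧ (∀ j, P j * P j = P j) ∧
      (∀ j, (P j).trace = 1) ∧
      (∀ j k, P j * P k = if j = k then P j else 0) ∧
      (∑ j : Fin n, P j) = 1 ∧
      (∀ p q : Fin n × Fin n, Q p q = ∑ k : Fin n, P k p.2 p.1 * P k q.2 q.1) := by
  classical
  have sc3 : ∀ (f : Fin n → Fin n → Fin n → ℝ),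
      ∑ k : Fin n, ∑ b : Fin n, ∑ c : Fin n, f k b c
        = ∑ b : Fin n, ∑ c : Fin n, ∑ k : Fin n, f k b c := by
    intro f
    rw [Finset.sum_comm]
    exact Finset.sum_congr rfl fun b _ => Finset.sum_comm
  -- completeness of the v's
  have hvv : ∀ a b : Fin n, ∑ i, v i a * v i b = if a = b then (1:ℝ) else 0 := by
    set W : Matrix (Fin n) (Fin n) ℝ := Matrix.of fun i a => v i a with hW
    have h1 : W * Wᵀ = 1 := by
      ext i j
      rw [Matrix.mul_apply, Matrix.one_apply]
      simp only [hW, Matrix.transpose_apply, Matrix.of_apply]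
      exact hvorth i j
    have h2 : Wᵀ * W = 1 := mul_eq_one_comm.mp h1
    intro a b
    have := congrFun (congrFun h2 a) b
    rw [Matrix.mul_apply, Matrix.one_apply] at this
    simpa [hW] using this
  -- eigen-decomposition of each A k
  have heig' : ∀ k i a, (∑ c, A k a c * v i c) = lam k i * v i a := by
    intro k i a
    have h := congrFun (heig k i) a
    simpa [Matrix.mulVec, dotProduct] using h
  have hAv : ∀ k (a c : Fin n), A k a c = ∑ i, lam k i * (v i a * v i c) := by
    intro k a c
    calc A k a c = ∑ c', A k a c' * (if c' = c then (1:ℝ) else 0) := by simp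
      _ = ∑ c', A k a c' * (∑ i, v i c' * v i c) := by
          refine Finset.sum_congr rfl fun c' _ => by rw [hvv]
      _ = ∑ c', ∑ i, A k a c' * (v i c' * v i c) := by
          refine Finset.sum_congr rfl fun c' _ => Finset.mul_sum _ _ _
      _ = ∑ i, ∑ c', A k a c' * (v i c' * v i c) := Finset.sum_comm
      _ = ∑ i, (∑ c', A k a c' * v i c') * v i c := by
          refine Finset.sum_congr rfl fun i _ => ?_
          rw [Finset.sum_mul]
          exact Finset.sum_congr rfl fun c' _ => by ring
      _ = ∑ i, lam k i * (v i a * v i c) := by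
          refine Finset.sum_congr rfl fun i _ => ?_
          rw [heig' k i a]
          ring
  -- four index swap helper
  have s4comm : ∀ (f : Fin n → Fin n → Fin n → Fin n → ℝ),
      ∑ a, ∑ c, ∑ i, ∑ i', f a c i i' = ∑ i, ∑ i', ∑ a, ∑ c, f a c i i' := by
    intro f
    calc ∑ a, ∑ c, ∑ i, ∑ i', f a c i i'
        = ∑ a, ∑ i, ∑ c, ∑ i', f a c i i' :=
          Finset.sum_congr rfl fun a _ => Finset.sum_comm
      _ = ∑ i, ∑ a, ∑ c, ∑ i', f a c i i' := Finset.sum_comm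
      _ = ∑ i, ∑ a, ∑ i', ∑ c, f a c i i' :=
          Finset.sum_congr rfl fun i _ => Finset.sum_congr rfl fun a _ => Finset.sum_comm
      _ = ∑ i, ∑ i', ∑ a, ∑ c, f a c i i' :=
          Finset.sum_congr rfl fun i _ => Finset.sum_comm
  -- orthogonality of the eigenvalue matrix
  have hlamrow : ∀ k m, ∑ i, lam k i * lam m i = if k = m then (1:ℝ) else 0 := by
    intro k m
    calc ∑ i, lam k i * lam m i
        = ∑ i, ∑ i', (lam k i * lam m i')
            * ((if i = i' then (1:ℝ) else 0) * (if i = i' then (1:ℝ) else 0)) := by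
          refine Finset.sum_congr rfl fun i _ => ?_
          rw [Finset.sum_eq_single i]
          · simp
          · intro i' _ hne
            simp [Ne.symm hne]
          · intro h
            exact absurd (Finset.mem_univ i) h
      _ = ∑ i, ∑ i', (lam k i * lam m i')
            * ((∑ a, v i a * v i' a) * (∑ c, v i c * v i' c)) := by
          refine Finset.sum_congr rfl fun i _ => Finset.sum_congr rfl fun i' _ => ?_
          rw [hvorth]
      _ = ∑ i, ∑ i', ∑ a, ∑ c, (lam k i * (v i a * v i c)) * (lam m i' * (v i' a * v i' c)) := by
          refine Finset.sum_congr rfl fun i _ => Finset.sum_congr rfl fun i' _ => ?_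
          rw [Finset.sum_mul_sum, Finset.mul_sum]
          refine Finset.sum_congr rfl fun a _ => ?_
          rw [Finset.mul_sum]
          exact Finset.sum_congr rfl fun c _ => by ring
      _ = ∑ a, ∑ c, ∑ i, ∑ i', (lam k i * (v i a * v i c)) * (lam m i' * (v i' a * v i' c)) :=
          (s4comm _).symm
      _ = ∑ a, ∑ c, A k a c * A m a c := by
          refine Finset.sum_congr rfl fun a _ => Finset.sum_congr rfl fun c _ => ?_
          rw [hAv k a c, hAv m a c, Finset.sum_mul_sum]
      _ = if k = m then (1:ℝ) else 0 := orthAA k m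
  have hlam : ∀ i i', ∑ k, lam k i * lam k i' = if i = i' then (1:ℝ) else 0 := by
    set L : Matrix (Fin n) (Fin n) ℝ := Matrix.of fun k i => lam k i with hL
    have h1 : L * Lᵀ = 1 := by
      ext k m
      rw [Matrix.mul_apply, Matrix.one_apply]
      simpa [hL] using hlamrow k m
    have h2 : Lᵀ * L = 1 := mul_eq_one_comm.mp h1
    intro i i'
    have := congrFun (congrFun h2 i) i'
    rw [Matrix.mul_apply, Matrix.one_apply] at this
    simpa [hL] using this
  -- the projections
  refine ⟨fun i => Matrix.of fun a b => v i a * v i b, ?_, ?_, ?_, ?_, ?_, ?_⟩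
  · intro j
    ext a b
    simp only [Matrix.transpose_apply, Matrix.of_apply]
    ring
  · intro j
    ext a b
    rw [Matrix.mul_apply]
    simp only [Matrix.of_apply]
    calc ∑ c, (v j a * v j c) * (v j c * v j b)
        = (v j a * v j b) * ∑ c, v j c * v j c := by
          rw [Finset.mul_sum]
          exact Finset.sum_congr rfl fun c _ => by ring
      _ = v j a * v j b := by rw [hvorth j j]; simp
  · intro j
    rw [Matrix.trace]
    unfold Matrix.diag
    simpa using hvorth j j
  · intro j k
    ext a b
    rw [Matrix.mul_apply]
    simp only [Matrix.of_apply]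
    have : ∑ c, (v j a * v j c) * (v k c * v k b)
        = (v j a * v k b) * ∑ c, v j c * v k c := by
      rw [Finset.mul_sum]
      exact Finset.sum_congr rfl fun c _ => by ring
    rw [this, hvorth j k]
    by_cases h : j = k
    · subst h
      simp
    · simp [h]
  · ext a b
    rw [Matrix.sum_apply, Matrix.one_apply]
    simpa using hvv a b
  · intro p q
    obtain ⟨p1, p2⟩ := p
    obtain ⟨q1, q2⟩ := q
    calc Q (p1, p2) (q1, q2) = ∑ k, A k p1 p2 * A k q1 q2 := Qexp p1 p2 q1 q2
      _ = ∑ k, ∑ i, ∑ i', (lam k i * lam k i')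
            * ((v i p1 * v i p2) * (v i' q1 * v i' q2)) := by
          refine Finset.sum_congr rfl fun k _ => ?_
          rw [hAv k p1 p2, hAv k q1 q2, Finset.sum_mul_sum]
          exact Finset.sum_congr rfl fun i _ => Finset.sum_congr rfl fun i' _ => by ring
      _ = ∑ i, ∑ i', ∑ k, (lam k i * lam k i')
            * ((v i p1 * v i p2) * (v i' q1 * v i' q2)) := sc3 _
      _ = ∑ i, ∑ i', (∑ k, lam k i * lam k i')
            * ((v i p1 * v i p2) * (v i' q1 * v i' q2)) := by
          refine Finset.sum_congr rfl fun i _ => Finset.sum_congr rfl fun i' _ => ?_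
          rw [Finset.sum_mul]
      _ = ∑ i, (v i p1 * v i p2) * (v i q1 * v i q2) := by
          refine Finset.sum_congr rfl fun i _ => ?_
          rw [Finset.sum_eq_single i]
          · rw [hlam i i]
            simp
          · intro i' _ hne
            rw [hlam i i']
            simp [Ne.symm hne]
          · intro h
            exact absurd (Finset.mem_univ i) h
      _ = ∑ i, (Matrix.of fun a b => v i a * v i b) p2 p1
            * (Matrix.of fun a b => v i a * v i b) q2 q1 := by
          refine Finset.sum_congr rfl fun i _ => ?_
          simp only [Matrix.of_apply]
          ring


theorem stmt17 (n : ℕ) (Q : Matrix (Fin n × Fin n) (Fin n × Fin n) ℝ)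
    (hsym : ∀ (σ : Equiv.Perm (Fin 4)) (v : Fin 4 → Fin n),
      Q (v 0, v 2) (v 1, v 3) = Q (v (σ 0), v (σ 2)) (v (σ 1), v (σ 3)))
    (htr : ∀ i j : Fin n, (∑ r : Fin n, Q (i, r) (j, r)) = if i = j then (1 : ℝ) else 0)
    (hproj : Q * Q = Q) :
    ∃ P : Fin n → Matrix (Fin n) (Fin n) ℝ,
      (∀ j, (P j)ᵀ = P j) ∧ (∀ j, P j * P j = P j) ∧
      (∀ j, (P j).trace = 1) ∧
      (∀ j k, P j * P k = if j = k then P j else 0) ∧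
      (∑ j : Fin n, P j) = 1 ∧
      (∀ p q : Fin n × Fin n, Q p q = ∑ k : Fin n, P k p.2 p.1 * P k q.2 q.1) := by
  classical
  have hs : ∀ (σ : Equiv.Perm (Fin 4)) (a b c d : Fin n),
      Q (a, c) (b, d) = Q (![a,b,c,d] (σ 0), ![a,b,c,d] (σ 2)) (![a,b,c,d] (σ 1), ![a,b,c,d] (σ 3)) := by
    intro σ a b c d
    simpa using hsym σ ![a,b,c,d]
  have key : ∀ (σ : Equiv.Perm (Fin 4)) (i0 i1 i2 i3 : Fin 4), σ 0 = i0 → σ 1 = i1 → σ 2 = i2 →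
      σ 3 = i3 → ∀ a b c d : Fin n,
      Q (a, c) (b, d) = Q (![a,b,c,d] i0, ![a,b,c,d] i2) (![a,b,c,d] i1, ![a,b,c,d] i3) := by
    intro σ i0 i1 i2 i3 h0 h1 h2 h3 a b c d
    have h := hs σ a b c d
    rw [h0, h1, h2, h3] at h
    exact h
  have sH : ∀ a b c d : Fin n, Q (a,c) (b,d) = Q (b,d) (a,c) := by
    have h := key ((Equiv.swap 0 1).trans (Equiv.swap 2 3)) 1 0 3 2
      (by decide) (by decide) (by decide) (by decide)
    intro a b c d
    simpa using h a b c d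
  have s02 : ∀ a b c d : Fin n, Q (a,c) (b,d) = Q (c,a) (b,d) := by
    have h := key (Equiv.swap 0 2) 2 1 0 3 (by decide) (by decide) (by decide) (by decide)
    intro a b c d
    simpa using h a b c d
  have s13 : ∀ a b c d : Fin n, Q (a,c) (b,d) = Q (a,c) (d,b) := by
    have h := key (Equiv.swap 1 3) 0 3 2 1 (by decide) (by decide) (by decide) (by decide)
    intro a b c d
    simpa using h a b c d
  have s4 : ∀ a b c d : Fin n, Q (a,b) (c,d) = Q (a,d) (b,c) := by
    have h := key ((Equiv.swap 2 3).trans (Equiv.swap 1 2)) 0 2 3 1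
      (by decide) (by decide) (by decide) (by decide)
    intro a b c d
    simpa using h a c b d
  have hherm : Q.IsHermitian := by
    rw [Matrix.IsHermitian]
    ext p q
    obtain ⟨a, c⟩ := p
    obtain ⟨b, d⟩ := q
    rw [Matrix.conjTranspose_apply, star_trivial]
    exact sH b a d c
  have htrace : Q.trace = (n : ℝ) := by
    rw [Matrix.trace]
    unfold Matrix.diag
    rw [Fintype.sum_prod_type]
    calc ∑ a : Fin n, ∑ c : Fin n, Q (a, c) (a, c)
        = ∑ a : Fin n, (1:ℝ) := by
          refine Finset.sum_congr rfl fun a _ => ?_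
          simpa using htr a a
      _ = (n : ℝ) := by simp
  obtain ⟨w, hw, horthw⟩ := specDecomp17 n Q hherm hproj htrace
  set A : Fin n → Matrix (Fin n) (Fin n) ℝ := fun k => Matrix.of fun a c => w k (a, c) with hA
  have Qexp : ∀ a c b d : Fin n, Q (a,c) (b,d) = ∑ k, A k a c * A k b d := by
    intro a c b d
    simpa [hA] using hw (a,c) (b,d)
  have orthAA : ∀ k m, ∑ a, ∑ c, A k a c * A m a c = if k = m then (1:ℝ) else 0 := by
    intro k m
    have h := horthw k m
    rw [Fintype.sum_prod_type] at h
    simpa [hA] using h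
  obtain ⟨hT, hAcomm⟩ := midLemma17 htr s02 s13 s4 Qexp orthAA
  have hAherm : ∀ k, (A k).IsHermitian := by
    intro k
    rw [Matrix.IsHermitian]
    ext a c
    rw [Matrix.conjTranspose_apply, star_trivial]
    exact congrFun (congrFun (hT k) a) c
  obtain ⟨v, lam, hvorth, heig⟩ := jointDiag17 n A hAherm hAcomm
  exact finalLemma17 Qexp orthAA hvorth heig
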